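/- Let 𝒜 = diag(α_1,…,α_n) and for each z ∈ ℤⁿ define the decision region 𝒟_z = U·𝒜·z + 𝒫. Then the family {𝒟_z : z ∈ ℤⁿ} is a partition of ℝⁿ (every y ∈ ℝⁿ belongs to exactly one 𝒟_z), and for every y ∈ ℝⁿ and z ∈ ℤⁿ one has c_SIC(y) = 𝒜·z if and only if y ∈ 𝒟_z. -/

import Mathlib

open Finset

/-- The SIC (successive interference cancellation) quantizer with respect to an
upper-triangular matrix `U` and per-coordinate spacings `α`, defined by backward
recursion `c_SIC(y)_i = α_i ⌊(y_i − Σ_{j>i} U_{i,j} c_SIC(y)_j)/(α_i U_{i,i}) + 1/2⌋`. -/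
noncomputable def cSIC {n : ℕ} (U : Matrix (Fin n) (Fin n) ℝ) (α : Fin n → ℝ)
    (y : Fin n → ℝ) : Fin n → ℝ
  | i =>
    α i * ((round ((y i - ∑ j ∈ (Finset.univ.filter fun j => i < j).attach,
        U i j.1 * cSIC U α y j.1) / (α i * U i i)) : ℤ) : ℝ)
termination_by i => n - i.1
decreasing_by
  have h := j.2
  simp only [Finset.mem_filter, Finset.mem_univ, true_and] at h
  have h2 : (j.1 : ℕ) < n := j.1.isLt
  have h3 : (i : ℕ) < (j.1 : ℕ) := h
  omega

/-- The decision region `𝒟_z = U·𝒜·z + 𝒫` of the SIC quantizer, where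
`𝒫 = ∏_i [−α_i U_{i,i}/2, α_i U_{i,i}/2)` and `𝒜 = diag(α)`. -/
def decisionRegion {n : ℕ} (U : Matrix (Fin n) (Fin n) ℝ) (α : Fin n → ℝ)
    (z : Fin n → ℤ) : Set (Fin n → ℝ) :=
  {y | ∀ i : Fin n, y i - U.mulVec (fun j => α j * (z j : ℝ)) i ∈
    Set.Ico (-(α i * U i i) / 2) (α i * U i i / 2)}

lemma round_eq_iff' (x : ℝ) (m : ℤ) :
    round x = m ↔ x - m ∈ Set.Ico (-(1:ℝ)/2) (1/2) := by
  constructor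
  · intro h
    have : round (x - (m : ℝ)) = 0 := by rw [round_sub_intCast, h, sub_self]
    have := round_eq_zero_iff.mp this
    simpa [neg_div] using this
  · intro h
    have : round (x - (m : ℝ)) = 0 := round_eq_zero_iff.mpr (by simpa [neg_div] using h)
    rw [round_sub_intCast] at this
    omega

lemma cSIC_unfold {n : ℕ} (U : Matrix (Fin n) (Fin n) ℝ) (α : Fin n → ℝ)
    (y : Fin n → ℝ) (i : Fin n) :
    cSIC U α y i = α i * ((round ((y i - ∑ j ∈ (Finset.univ.filter fun j => i < j),
        U i j * cSIC U α y j) / (α i * U i i)) : ℤ) : ℝ) := by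
  rw [cSIC, ← Finset.sum_attach (Finset.univ.filter fun j => i < j)
    (fun j => U i j * cSIC U α y j)]

lemma sum_split {n : ℕ} (U : Matrix (Fin n) (Fin n) ℝ)
    (hUtri : ∀ i j : Fin n, j < i → U i j = 0) (i : Fin n) (g : Fin n → ℝ) :
    ∑ j, U i j * g j = U i i * g i + ∑ j ∈ Finset.univ.filter (fun j => i < j),
      U i j * g j := by
  have h1 : ∑ j ∈ (Finset.univ.filter fun j => i ≤ j), U i j * g j
      = ∑ j, U i j * g j := by
    apply Finset.sum_filter_of_ne
    intro j _ hne
    by_contra h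
    push_neg at h
    exact hne (by rw [hUtri i j h, zero_mul])
  rw [← h1]
  have h2 : (Finset.univ.filter fun j => i ≤ j)
      = insert i (Finset.univ.filter fun j => i < j) := by
    ext j
    simp only [Finset.mem_filter, Finset.mem_univ, true_and, Finset.mem_insert]
    rw [Fin.le_def, Fin.lt_def, Fin.ext_iff]
    omega
  rw [h2, Finset.sum_insert (by simp)]

/-- the decision regions `{𝒟_z : z ∈ ℤⁿ}` partition `ℝⁿ` (every `y`
belongs to exactly one of them), and `c_SIC(y) = 𝒜·z` iff `y ∈ 𝒟_z`. -/
theorem sic_decision_regions_partition {n : ℕ} (hn : 1 ≤ n)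
    (U : Matrix (Fin n) (Fin n) ℝ)
    (hUtri : ∀ i j : Fin n, j < i → U i j = 0)
    (hUdiag : ∀ i : Fin n, 0 < U i i)
    (α : Fin n → ℝ) (hα : ∀ i : Fin n, 0 < α i) :
    (∀ y : Fin n → ℝ, ∃! z : Fin n → ℤ, y ∈ decisionRegion U α z) ∧
    (∀ (y : Fin n → ℝ) (z : Fin n → ℤ),
      cSIC U α y = (fun i => α i * (z i : ℝ)) ↔ y ∈ decisionRegion U α z) := by
  have hβ : ∀ i : Fin n, 0 < α i * U i i := fun i => mul_pos (hα i) (hUdiag i)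
  -- reformulation of membership
  have hmem : ∀ (y : Fin n → ℝ) (z : Fin n → ℤ) (i : Fin n),
      (y i - U.mulVec (fun j => α j * (z j : ℝ)) i ∈
        Set.Ico (-(α i * U i i) / 2) (α i * U i i / 2)) ↔
      round ((y i - ∑ j ∈ Finset.univ.filter (fun j => i < j),
        U i j * (α j * (z j : ℝ))) / (α i * U i i)) = z i := by
    intro y z i
    rw [round_eq_iff']
    have hb := hβ i
    have hsplit := sum_split U hUtri i (fun j => α j * (z j : ℝ))
    have hmv : U.mulVec (fun j => α j * (z j : ℝ)) i
        = ∑ j, U i j * (α j * (z j : ℝ)) := rfl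
    rw [hmv, hsplit]
    set S := ∑ j ∈ Finset.univ.filter (fun j => i < j), U i j * (α j * (z j : ℝ)) with hS
    have key : (y i - S) / (α i * U i i) - (z i : ℝ)
        = (y i - (U i i * (α i * (z i : ℝ)) + S)) / (α i * U i i) := by
      field_simp [(hα i).ne', (hUdiag i).ne']
      ring
    rw [key, Set.mem_Ico, Set.mem_Ico, le_div_iff₀ hb, div_lt_iff₀ hb]
    constructor <;> rintro ⟨h1, h2⟩ <;> constructor <;> nlinarith
  -- forward: membership implies cSIC equals
  have hfwd : ∀ (y : Fin n → ℝ) (z : Fin n → ℤ), y ∈ decisionRegion U α z →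
      ∀ i : Fin n, cSIC U α y i = α i * (z i : ℝ) := by
    intro y z hy
    have key : ∀ k : ℕ, ∀ i : Fin n, n - i.1 ≤ k → cSIC U α y i = α i * (z i : ℝ) := by
      intro k
      induction k with
      | zero => intro i hi; exact absurd hi (by have := i.isLt; omega)
      | succ k ih =>
        intro i hi
        have hIH : ∀ j ∈ Finset.univ.filter (fun j : Fin n => i < j),
            U i j * cSIC U α y j = U i j * (α j * (z j : ℝ)) := by
          intro j hj
          simp only [Finset.mem_filter, Finset.mem_univ, true_and, Fin.lt_def] at hj
          rw [ih j (by have := j.isLt; omega)]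
        rw [cSIC_unfold, Finset.sum_congr rfl hIH, (hmem y z i).mp (hy i)]
    intro i; exact key n i (by omega)
  -- backward: cSIC equals implies membership
  have hbwd : ∀ (y : Fin n → ℝ) (z : Fin n → ℤ),
      (∀ i, cSIC U α y i = α i * (z i : ℝ)) → y ∈ decisionRegion U α z := by
    intro y z h i
    rw [hmem y z i]
    have := cSIC_unfold U α y i
    rw [h i] at this
    have hsum : ∀ j ∈ Finset.univ.filter (fun j : Fin n => i < j),
        U i j * cSIC U α y j = U i j * (α j * (z j : ℝ)) := fun j _ => by rw [h j]
    rw [Finset.sum_congr rfl hsum] at this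
    have hαi := (hα i).ne'
    have : ((round ((y i - ∑ j ∈ Finset.univ.filter (fun j => i < j),
        U i j * (α j * (z j : ℝ))) / (α i * U i i)) : ℤ) : ℝ) = (z i : ℝ) := by
      field_simp at this
      simpa [mul_assoc] using this.symm
    exact_mod_cast this
  have hiff : ∀ (y : Fin n → ℝ) (z : Fin n → ℤ),
      cSIC U α y = (fun i => α i * (z i : ℝ)) ↔ y ∈ decisionRegion U α z := by
    intro y z
    constructor
    · intro h; exact hbwd y z (fun i => by rw [h])
    · intro h; funext i; exact hfwd y z h i
  refine ⟨fun y => ?_, hiff⟩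
  -- existence: define z from cSIC
  set z : Fin n → ℤ := fun i => round ((y i - ∑ j ∈ (Finset.univ.filter fun j => i < j),
      U i j * cSIC U α y j) / (α i * U i i)) with hz
  have hcz : ∀ i, cSIC U α y i = α i * (z i : ℝ) := fun i => cSIC_unfold U α y i
  refine ⟨z, hbwd y z hcz, ?_⟩
  intro z' hz'
  funext i
  have h1 := hfwd y z' hz' i
  have h2 := hcz i
  have : (z' i : ℝ) = (z i : ℝ) := by
    have := h1.symm.trans h2
    exact mul_left_cancel₀ (hα i).ne' this
  exact_mod_cast this
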